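/- Let d ≥ 1 be an integer. Let u : ℝ^d → ℝ be continuously differentiable with compact support, and let c : ℝ^d → ℝ be twice continuously differentiable with −Δc(x) = u(x) for every x ∈ ℝ^d. Then ∫_{ℝ^d} u(x) ∇c(x) · ∇u(x) dx = (1/2) ∫_{ℝ^d} u(x)³ dx. -/

import Mathlib

open MeasureTheory

/-- If `u` is `C¹` with compact support, `c` is `C²` and `−Δc = u`
pointwise on `ℝ^d`, then `∫ u ∇c · ∇u dx = (1/2) ∫ u³ dx`. -/
theorem keller_segel_cancellation (d : ℕ) (hd : 1 ≤ d)
    (u c : EuclideanSpace ℝ (Fin d) → ℝ)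
    (hu : ContDiff ℝ 1 u) (husupp : HasCompactSupport u)
    (hc : ContDiff ℝ 2 c)
    (hlap : ∀ x : EuclideanSpace ℝ (Fin d),
      -(∑ i : Fin d, fderiv ℝ (fun y => fderiv ℝ c y (EuclideanSpace.single i 1)) x
          (EuclideanSpace.single i 1)) = u x) :
    ∫ x : EuclideanSpace ℝ (Fin d), u x * (inner ℝ (gradient c x) (gradient u x) : ℝ)
      = (1 / 2) * ∫ x : EuclideanSpace ℝ (Fin d), (u x) ^ 3 := by
  let e : Fin d → EuclideanSpace ℝ (Fin d) := fun i => EuclideanSpace.single i (1 : ℝ)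
  have hud : Differentiable ℝ u := hu.differentiable one_ne_zero
  have hdu : Continuous (fderiv ℝ u) := (hu.fderiv_right (m := 0) le_rfl).continuous
  let g : Fin d → EuclideanSpace ℝ (Fin d) → ℝ := fun i y => fderiv ℝ c y (e i)
  have hg1 : ∀ i, ContDiff ℝ 1 (g i) :=
    fun i => (hc.fderiv_right (m := 1) (by norm_num)).clm_apply contDiff_const
  have hgd : ∀ i, Differentiable ℝ (g i) := fun i => (hg1 i).differentiable one_ne_zero
  have hgc : ∀ i, Continuous (g i) := fun i => (hg1 i).continuous
  have hgg : ∀ i, Continuous (fun x => fderiv ℝ (g i) x (e i)) :=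
    fun i => (((hg1 i).fderiv_right (m := 0) le_rfl).clm_apply contDiff_const).continuous
  let q : EuclideanSpace ℝ (Fin d) → ℝ := fun x => u x * u x
  have hq1 : ContDiff ℝ 1 q := hu.mul hu
  have hqd : Differentiable ℝ q := hq1.differentiable one_ne_zero
  have hqsupp : HasCompactSupport q := husupp.mul_left
  have hdq : ∀ (i : Fin d) (x : EuclideanSpace ℝ (Fin d)), fderiv ℝ q x (e i)
      = 2 * (u x * fderiv ℝ u x (e i)) := by
    intro i x
    have : fderiv ℝ q x = u x • fderiv ℝ u x + u x • fderiv ℝ u x :=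
      fderiv_mul (hud x) (hud x)
    rw [this]
    simp
    ring
  have hdqc : ∀ i, Continuous fun x => fderiv ℝ q x (e i) :=
    fun i => ((hq1.fderiv_right (m := 0) le_rfl).clm_apply contDiff_const).continuous
  have hdqsupp : ∀ i, HasCompactSupport fun x => fderiv ℝ q x (e i) :=
    fun i => hqsupp.fderiv_apply ℝ (e i)
  -- coordinates of gradients
  have hcoord : ∀ (f : EuclideanSpace ℝ (Fin d) → ℝ) (x : EuclideanSpace ℝ (Fin d)) (i : Fin d),
      gradient f x i = fderiv ℝ f x (e i) := by
    intro f x i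
    have h2 : (inner ℝ (gradient f x) (e i) : ℝ) = fderiv ℝ f x (e i) :=
      InnerProductSpace.toDual_symm_apply
    rw [← h2]
    simp only [e, EuclideanSpace.inner_single_right, one_mul, conj_trivial]
  have hinner : ∀ x : EuclideanSpace ℝ (Fin d), (inner ℝ (gradient c x) (gradient u x) : ℝ)
      = ∑ i, g i x * fderiv ℝ u x (e i) := by
    intro x
    rw [show (inner ℝ (gradient c x) (gradient u x) : ℝ)
        = ∑ i, gradient c x i * gradient u x i by
      simp only [PiLp.inner_apply, RCLike.inner_apply', conj_trivial]]
    refine Finset.sum_congr rfl fun i _ => ?_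
    rw [hcoord c x i, hcoord u x i]
  -- integrability
  have hint1 : ∀ i, Integrable (fun x => u x * (g i x * fderiv ℝ u x (e i))) := by
    intro i
    exact (hu.continuous.mul ((hgc i).mul ((hdu.clm_apply continuous_const)))).integrable_of_hasCompactSupport
      (husupp.mul_right)
  have hint2 : ∀ i, Integrable (fun x => q x * fderiv ℝ (g i) x (e i)) := by
    intro i
    exact ((hq1.continuous).mul (hgg i)).integrable_of_hasCompactSupport (hqsupp.mul_right)
  -- integration by parts in each direction
  have key : ∀ i, ∫ x, u x * (g i x * fderiv ℝ u x (e i))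
      = -(1 / 2) * ∫ x, q x * fderiv ℝ (g i) x (e i) := by
    intro i
    have h1 : Integrable (fun x => fderiv ℝ q x (e i) * g i x) :=
      ((hdqc i).mul (hgc i)).integrable_of_hasCompactSupport ((hdqsupp i).mul_right)
    have h3 : Integrable (fun x => q x * g i x) :=
      ((hq1.continuous).mul (hgc i)).integrable_of_hasCompactSupport (hqsupp.mul_right)
    have IBP := integral_mul_fderiv_eq_neg_fderiv_mul_of_integrable h1 (hint2 i) h3 (fun x _ => hqd x) (fun x _ => hgd i x)
    have h2 : ∫ x, fderiv ℝ q x (e i) * g i x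
        = 2 * ∫ x, u x * (g i x * fderiv ℝ u x (e i)) := by
      rw [← integral_const_mul]
      refine integral_congr_ae (Filter.Eventually.of_forall fun x => ?_)
      dsimp only
      rw [hdq i x]; ring
    rw [h2] at IBP
    linarith
  -- put everything together
  calc ∫ x, u x * (inner ℝ (gradient c x) (gradient u x) : ℝ)
      = ∫ x, ∑ i, u x * (g i x * fderiv ℝ u x (e i)) := by
        refine integral_congr_ae (Filter.Eventually.of_forall fun x => ?_)
        dsimp only
        rw [hinner x, Finset.mul_sum]
    _ = ∑ i, ∫ x, u x * (g i x * fderiv ℝ u x (e i)) :=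
        integral_finset_sum _ fun i _ => hint1 i
    _ = ∑ i, -(1 / 2) * ∫ x, q x * fderiv ℝ (g i) x (e i) := by
        exact Finset.sum_congr rfl fun i _ => key i
    _ = -(1 / 2) * ∑ i, ∫ x, q x * fderiv ℝ (g i) x (e i) := by
        rw [Finset.mul_sum]
    _ = -(1 / 2) * ∫ x, ∑ i, q x * fderiv ℝ (g i) x (e i) := by
        rw [integral_finset_sum _ fun i _ => hint2 i]
    _ = -(1 / 2) * ∫ x, -((u x) ^ 3) := by
        congr 1
        refine integral_congr_ae (Filter.Eventually.of_forall fun x => ?_)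
        dsimp only
        rw [← Finset.mul_sum]
        have hsum : ∑ i, fderiv ℝ (g i) x (e i) = -(u x) := by
          have := hlap x
          simp only [g, e]
          linarith
        rw [hsum]
        simp [q]
        ring
    _ = (1 / 2) * ∫ x, (u x) ^ 3 := by
        rw [integral_neg]; ring
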